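/- The Gromov–Hausdorff space is not locally compact: no point of 𝓜 has a totally bounded neighborhood. In particular, for every compact metric space X and every r > 0, the closed ball of radius r around X in (𝓜, d_GH) is not totally bounded. -/

import Mathlib

open GromovHausdorff Metric Set

namespace GHNotLC

variable {X : Type} [MetricSpace X]

/-- Distance on `X ⊕ Fin n`: extra points are at distance `r` from each other and
`r + dist x x0` from `x : X`. -/
def augDist (x0 : X) (r : ℝ) {n : ℕ} : X ⊕ Fin n → X ⊕ Fin n → ℝ
  | .inl x, .inl y => dist x y
  | .inl x, .inr _ => r + dist x x0
  | .inr _, .inl y => r + dist y x0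
  | .inr i, .inr j => if i = j then 0 else r

theorem augDist_self (x0 : X) (r : ℝ) {n : ℕ} (p : X ⊕ Fin n) : augDist x0 r p p = 0 := by
  rcases p with x | i <;> simp [augDist]

theorem augDist_comm (x0 : X) (r : ℝ) {n : ℕ} (p q : X ⊕ Fin n) :
    augDist x0 r p q = augDist x0 r q p := by
  rcases p with x | i <;> rcases q with y | j <;> simp [augDist, dist_comm, eq_comm]

theorem augDist_triangle (x0 : X) {r : ℝ} (hr : 0 ≤ r) {n : ℕ} (p q s : X ⊕ Fin n) :
    augDist x0 r p s ≤ augDist x0 r p q + augDist x0 r q s := by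
  rcases p with x | i <;> rcases q with y | j <;> rcases s with z | k <;>
    simp only [augDist]
  · exact dist_triangle x y z
  · have := dist_triangle x y x0; linarith
  · have h1 := dist_triangle x x0 z
    have h2 := dist_comm x0 z
    linarith
  · have := dist_nonneg (x := x) (y := x0)
    split <;> linarith
  · have h1 := dist_triangle z y x0
    have h2 := dist_comm z y
    linarith
  · have h1 := dist_nonneg (x := y) (y := x0)
    split <;> linarith
  · have := dist_nonneg (x := z) (y := x0)
    split <;> linarith
  · by_cases hik : i = k
    · simp only [if_pos hik]
      split_ifs <;> linarith
    · simp only [if_neg hik]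
      by_cases hij : i = j
      · have hjk : ¬ j = k := fun h => hik (hij.trans h)
        simp only [if_pos hij, if_neg hjk]
        linarith
      · split_ifs <;> linarith

theorem augDist_eq_zero (x0 : X) {r : ℝ} (hr : 0 < r) {n : ℕ} (p q : X ⊕ Fin n)
    (h : augDist x0 r p q = 0) : p = q := by
  rcases p with x | i <;> rcases q with y | j <;> simp only [augDist] at h
  · exact congrArg Sum.inl (eq_of_dist_eq_zero h)
  · have := dist_nonneg (x := x) (y := x0); exfalso; linarith
  · have := dist_nonneg (x := y) (y := x0); exfalso; linarith
  · split_ifs at h with hij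
    · exact congrArg Sum.inr hij
    · exact absurd h (by linarith)

/-- The metric space structure on `X ⊕ Fin n`, with the standard sum topology. -/
def augMetric (x0 : X) {r : ℝ} (hr : 0 < r) (n : ℕ) : MetricSpace (X ⊕ Fin n) :=
  MetricSpace.ofDistTopology (augDist x0 r) (augDist_self x0 r) (augDist_comm x0 r)
    (augDist_triangle x0 hr.le)
    (by
      intro s
      constructor
      · intro hs p hp
        rcases p with x | i
        · have hopen : IsOpen (Sum.inl ⁻¹' s : Set X) := hs.preimage continuous_inl
          rcases Metric.isOpen_iff.1 hopen x hp with ⟨ε, εpos, hε⟩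
          refine ⟨min ε r, lt_min εpos hr, fun q hq => ?_⟩
          rcases q with y | j
          · have : dist x y < ε := lt_of_lt_of_le hq (min_le_left _ _)
            exact hε (show y ∈ ball x ε by rwa [mem_ball, dist_comm])
          · exfalso
            have h1 : augDist x0 r (Sum.inl x) (Sum.inr j) = r + dist x x0 := rfl
            have := dist_nonneg (x := x) (y := x0)
            have h2 := min_le_right ε r
            rw [h1] at hq
            linarith
        · refine ⟨r, hr, fun q hq => ?_⟩
          rcases q with y | j
          · exfalso
            have h1 : augDist x0 r (Sum.inr i) (Sum.inl y) = r + dist y x0 := rfl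
            have := dist_nonneg (x := y) (y := x0)
            rw [h1] at hq
            linarith
          · have h1 : augDist x0 r (Sum.inr i) (Sum.inr j) = if i = j then 0 else r := rfl
            rw [h1] at hq
            split_ifs at hq with hij
            · rwa [← hij]
            · exact absurd hq (lt_irrefl r)
      · intro H
        rw [isOpen_sum_iff]
        constructor
        · rw [Metric.isOpen_iff]
          intro x hx
          rcases H (Sum.inl x) hx with ⟨ε, εpos, hε⟩
          refine ⟨ε, εpos, fun y hy => ?_⟩
          exact hε (Sum.inl y) (by rw [mem_ball, dist_comm] at hy; exact hy)
        · exact isOpen_discrete _)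
    (fun p q => augDist_eq_zero x0 hr p q)

section Aug

variable [CompactSpace X] [Nonempty X] (x0 : X) {r : ℝ} (hr : 0 < r) (n : ℕ)

/-- With the augmented metric, the sum is a compact space (the topology is the sum topology). -/
theorem aug_compact :
    @CompactSpace (X ⊕ Fin n) (augMetric x0 hr n).toUniformSpace.toTopologicalSpace := by
  constructor
  rw [← Set.range_inl_union_range_inr]
  exact (isCompact_range continuous_inl).union (isCompact_range continuous_inr)

/-- The isometry class of the augmented space. -/
noncomputable def augGH : GHSpace :=
  @toGHSpace (X ⊕ Fin n) (augMetric x0 hr n) (aug_compact x0 hr n) ⟨Sum.inl x0⟩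

theorem ghDist_augGH_le :
    @ghDist X (X ⊕ Fin n) _ _ _ (augMetric x0 hr n) ⟨Sum.inl x0⟩ (aug_compact x0 hr n) ≤ r := by
  letI := augMetric x0 hr n
  haveI := aug_compact x0 hr n
  haveI : Nonempty (X ⊕ Fin n) := ⟨Sum.inl x0⟩
  have hisom : Isometry (Sum.inl : X → X ⊕ Fin n) :=
    Isometry.of_dist_eq fun x y => rfl
  have h := ghDist_le_hausdorffDist (X := X) (Y := X ⊕ Fin n) hisom isometry_id
  refine h.trans ?_
  rw [Set.range_id]
  refine hausdorffDist_le_of_mem_dist hr.le ?_ ?_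
  · intro p hp
    exact ⟨p, mem_univ _, by simp [hr.le]⟩
  · rintro (x | i) -
    · exact ⟨Sum.inl x, ⟨x, rfl⟩, by simp [hr.le]⟩
    · refine ⟨Sum.inl x0, ⟨x0, rfl⟩, ?_⟩
      have h1 : dist (Sum.inr i : X ⊕ Fin n) (Sum.inl x0) = r + dist x0 x0 := rfl
      rw [h1, dist_self, add_zero]

end Aug

/-- Key covering/separation contradiction: if `ghDist Y Z < δ`, `Y` has an `ε`-net with
`t.card` elements, and `Z` has more than `t.card` points pairwise at distance `≥ r`
with `2ε + 2δ < r`, we get a contradiction. -/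
theorem key {Y Z : Type} [MetricSpace Y] [CompactSpace Y] [Nonempty Y]
    [MetricSpace Z] [CompactSpace Z] [Nonempty Z]
    {δ ε r : ℝ} (hεδ : 2 * ε + 2 * δ < r)
    {t : Finset Y} (ht : ∀ y : Y, ∃ c ∈ t, dist y c ≤ ε)
    {m : ℕ} (hm : t.card < m) (f : Fin m → Z)
    (hf : ∀ i j : Fin m, i ≠ j → r ≤ dist (f i) (f j))
    (hd : ghDist Y Z < δ) : False := by
  set Φ := optimalGHInjl Y Z
  set Ψ := optimalGHInjr Y Z
  have hΦ : Isometry Φ := isometry_optimalGHInjl Y Z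
  have hΨ : Isometry Ψ := isometry_optimalGHInjr Y Z
  have hHD : hausdorffDist (range Φ) (range Ψ) < δ := by
    rw [hausdorffDist_optimal]; exact hd
  have fin : EMetric.hausdorffEdist (range Φ) (range Ψ) ≠ ⊤ :=
    hausdorffEdist_ne_top_of_nonempty_of_bounded (range_nonempty _) (range_nonempty _)
      (isCompact_range hΦ.continuous).isBounded (isCompact_range hΨ.continuous).isBounded
  have hy : ∀ i : Fin m, ∃ y : Y, dist (Φ y) (Ψ (f i)) < δ := by
    intro i
    rcases exists_dist_lt_of_hausdorffDist_lt' (mem_range_self (f i)) hHD fin with ⟨x, hx, hxd⟩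
    rcases hx with ⟨y, rfl⟩
    exact ⟨y, hxd⟩
  choose y hyd using hy
  have hc : ∀ i : Fin m, ∃ c : {c // c ∈ t}, dist (y i) c.1 ≤ ε := by
    intro i
    rcases ht (y i) with ⟨c, hct, hcd⟩
    exact ⟨⟨c, hct⟩, hcd⟩
  choose c hcd using hc
  have hcard : Fintype.card {c // c ∈ t} < Fintype.card (Fin m) := by
    rwa [Fintype.card_coe, Fintype.card_fin]
  obtain ⟨i, j, hij, hcij⟩ := Fintype.exists_ne_map_eq_of_card_lt c hcard
  have h1 : r ≤ dist (f i) (f j) := hf i j hij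
  have h2 : dist (f i) (f j) = dist (Ψ (f i)) (Ψ (f j)) := (hΨ.dist_eq _ _).symm
  have h3 : dist (Ψ (f i)) (Ψ (f j)) ≤
      dist (Ψ (f i)) (Φ (y i)) + dist (Φ (y i)) (Φ (y j)) + dist (Φ (y j)) (Ψ (f j)) :=
    dist_triangle4 _ _ _ _
  have h4 : dist (Φ (y i)) (Φ (y j)) = dist (y i) (y j) := hΦ.dist_eq _ _
  have h5 : dist (y i) (y j) ≤ dist (y i) (c i).1 + dist (y j) (c j).1 := calc
    dist (y i) (y j) ≤ dist (y i) (c i).1 + dist (c i).1 (y j) := dist_triangle _ _ _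
    _ = dist (y i) (c i).1 + dist (y j) (c j).1 := by rw [hcij, dist_comm ((c j : Y)) (y j)]
  have h6 := hcd i
  have h7 := hcd j
  have h8 := hyd i
  have h9 := hyd j
  rw [dist_comm (Ψ (f i)) (Φ (y i))] at h3
  linarith

end GHNotLC

open GHNotLC

/-- The Gromov–Hausdorff space is not locally compact: no point has a totally bounded
neighborhood; in particular no closed ball of positive radius is totally bounded. -/
theorem ghSpace_not_locallyCompact :
    (∀ p : GHSpace, ∀ s ∈ nhds p, ¬ TotallyBounded s) ∧
    (∀ p : GHSpace, ∀ r : ℝ, 0 < r → ¬ TotallyBounded (closedBall p r)) := by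
  have main : ∀ p : GHSpace, ∀ r : ℝ, 0 < r → ¬ TotallyBounded (closedBall p r) := by
    intro p r hr htb
    have h8 : (0 : ℝ) < r / 8 := by linarith
    obtain ⟨t, tfin, tcov⟩ := (Metric.totallyBounded_iff.1 htb) (r / 8) h8
    -- a finite (r/8)-net for each representative
    have hnet : ∀ q : GHSpace, ∃ fs : Finset q.Rep, ∀ y : q.Rep, ∃ c ∈ fs, dist y c ≤ r / 8 := by
      intro q
      obtain ⟨u, -, ufin, ucov⟩ :=
        finite_cover_balls_of_compact (X := q.Rep) isCompact_univ h8
      refine ⟨ufin.toFinset, fun y => ?_⟩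
      rcases Set.mem_iUnion₂.1 (ucov (mem_univ y)) with ⟨c, hc, hcy⟩
      exact ⟨c, ufin.mem_toFinset.2 hc, (mem_ball.1 hcy).le⟩
    choose nets hnets using hnet
    set N : ℕ := tfin.toFinset.sup fun q => (nets q).card with hN
    set m : ℕ := N + 1 with hm
    have : Nonempty p.Rep := inferInstance
    set x0 : p.Rep := Classical.arbitrary _ with hx0
    letI M := augMetric x0 hr m
    haveI cI := aug_compact x0 hr m
    haveI : Nonempty (p.Rep ⊕ Fin m) := ⟨Sum.inl x0⟩
    set Y : GHSpace := augGH x0 hr m with hY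
    have hmem : Y ∈ closedBall p r := by
      rw [mem_closedBall, dist_comm]
      have h1 : dist p Y = ghDist p.Rep (p.Rep ⊕ Fin m) := by
        conv_lhs => rw [← p.toGHSpace_rep]
        rfl
      rw [h1]
      exact ghDist_augGH_le x0 hr m
    rcases Set.mem_iUnion₂.1 (tcov hmem) with ⟨q, hqt, hqY⟩
    have hd : ghDist q.Rep (p.Rep ⊕ Fin m) < r / 8 := by
      have h1 : ghDist q.Rep (p.Rep ⊕ Fin m) = dist q Y := by
        conv_rhs => rw [← q.toGHSpace_rep]
        rfl
      rw [h1, dist_comm]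
      exact mem_ball.1 hqY
    have hcard : (nets q).card < m := by
      have : (nets q).card ≤ N := Finset.le_sup (f := fun q => (nets q).card) (tfin.mem_toFinset.2 hqt)
      omega
    exact key (δ := r / 8) (ε := r / 8) (r := r) (by linarith) (hnets q) hcard
      (fun i => (Sum.inr i : p.Rep ⊕ Fin m))
      (fun i j hij => by
        have h1 : dist (Sum.inr i : p.Rep ⊕ Fin m) (Sum.inr j) = if i = j then 0 else r := rfl
        rw [h1, if_neg hij])
      hd
  refine ⟨?_, main⟩
  intro p s hs htb
  rcases Metric.nhds_basis_closedBall.mem_iff.1 hs with ⟨r, hr, hsub⟩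
  exact main p r hr (htb.subset hsub)
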